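/- Let ω be an n-bit key with binary representation B (leading bit 1), and let f be the fixed point of the associated self-inverting permutation P_s. If ω = 2ⁿ − 1 then f = 2n+1; otherwise f = n + f₀ where f₀ is the position (1-indexed) of the leftmost zero in B. -/

import Mathlib

/-- Binary representation of `ω`, most significant bit first. -/
def binRep (ω : ℕ) : List Bool := (Nat.bits ω).reverse

/-- The extended binary `B*`: `n` ones, then the one's complement of `B`, then a zero. -/
def extBin (ω : ℕ) : List Bool :=
  List.replicate (binRep ω).length true ++ (binRep ω).map (!·) ++ [false]

/-- Ascending list of 1-indexed positions of bit `b` in the bit string `l`. -/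
def posOf (l : List Bool) (b : Bool) : List ℕ :=
  ((List.range l.length).filter (fun i => l.getD i false == b)).map (· + 1)

/-- `Z₀`: ascending positions of zeros in `B*`. -/
def Z0 (ω : ℕ) : List ℕ := posOf (extBin ω) false

/-- `Z₁`: ascending positions of ones in `B*`. -/
def Z1 (ω : ℕ) : List ℕ := posOf (extBin ω) true

/-- Bitonic permutation `P_b = Z₀ ++ reverse Z₁`. -/
def Pb (ω : ℕ) : List ℕ := Z0 ω ++ (Z1 ω).reverse

/-- The self-inverting permutation `P_s`: it pairs the elements of `P_b`
equidistant from its extremes, i.e. `P_s (b_{2n+2-i}) = b_i`. -/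
def Ps (ω : ℕ) (x : ℕ) : ℕ :=
  (Pb ω).getD ((Pb ω).length - 1 - (Pb ω).idxOf x) 0

lemma posOf_nil (b : Bool) : posOf [] b = [] := rfl

lemma posOf_cons (x : Bool) (l : List Bool) (b : Bool) :
    posOf (x :: l) b = (if x == b then [1] else []) ++ (posOf l b).map (· + 1) := by
  unfold posOf
  cases hx : x == b <;>
    simp [List.range_succ_eq_map, List.filter_map, List.map_map, Function.comp_def, hx,
      Nat.succ_eq_add_one]

lemma posOf_append (l1 l2 : List Bool) (b : Bool) :
    posOf (l1 ++ l2) b = posOf l1 b ++ (posOf l2 b).map (· + l1.length) := by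
  induction l1 with
  | nil => simp [posOf_nil]
  | cons x l ih =>
      simp [posOf_cons, ih, List.map_map, Function.comp_def, Nat.add_assoc, Nat.add_comm 1]

lemma posOf_replicate (m : ℕ) (b c : Bool) :
    posOf (List.replicate m b) c = if b = c then (List.range m).map (· + 1) else [] := by
  induction m with
  | zero => simp [posOf_nil]
  | succ m ih =>
      rw [List.replicate_succ, posOf_cons, ih]
      by_cases h : b = c <;>
        simp [h, List.range_succ_eq_map, List.map_map, Function.comp_def, Nat.succ_eq_add_one]

lemma posOf_map_not (l : List Bool) (b : Bool) :
    posOf (l.map (!·)) b = posOf l (!b) := by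
  induction l with
  | nil => simp [posOf_nil]
  | cons x l ih =>
      simp only [List.map_cons, posOf_cons, ih]
      cases x <;> cases b <;> rfl

lemma length_posOf (l : List Bool) (b : Bool) : (posOf l b).length = l.count b := by
  induction l with
  | nil => simp [posOf_nil]
  | cons x l ih =>
      rw [posOf_cons, List.count_cons]
      cases hx : x == b <;> simp_all [Nat.add_comm]

lemma posOf_head (l : List Bool) (b : Bool) (h : b ∈ l) :
    (posOf l b).getD 0 0 = l.idxOf b + 1 := by
  induction l with
  | nil => simp at h
  | cons x l ih =>
      rw [posOf_cons, List.idxOf_cons]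
      cases hx : x == b
      · have hb : b ∈ l := by
          rcases List.mem_cons.1 h with h' | h'
          · subst h'; simp at hx
          · exact h'
        have hne : posOf l b ≠ [] := by
          have := length_posOf l b
          have : 0 < (posOf l b).length := by
            rw [this]; exact List.count_pos_iff.2 hb
          exact List.ne_nil_of_length_pos this
        obtain ⟨y, t, hyt⟩ := List.exists_cons_of_ne_nil hne
        have := ih hb
        rw [hyt] at this ⊢
        simp at this ⊢
        omega
      · simp [hx]

lemma count_bool (l : List Bool) : l.count true + l.count false = l.length := by
  induction l with
  | nil => simp
  | cons x l ih => cases x <;> simp [List.count_cons] <;> omega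

lemma bits_two_pow_sub_one (n : ℕ) : (2^n - 1).bits = List.replicate n true := by
  induction n with
  | zero => simp
  | succ n ih =>
      have h1 : 1 ≤ 2^n := Nat.one_le_two_pow
      have : 2^(n+1) - 1 = 2 * (2^n - 1) + 1 := by
        rw [pow_succ]; omega
      rw [this, Nat.bit1_bits, ih, List.replicate_succ]

lemma eq_two_pow_sub_one_of_bits_all_true (m : ℕ)
    (h : m.bits = List.replicate m.bits.length true) : m = 2^(m.bits.length) - 1 := by
  induction m using Nat.binaryRec' with
  | zero => simp
  | bit b m hb ih =>
      rw [Nat.bits_append_bit m b hb] at h ⊢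
      simp only [List.length_cons, List.replicate_succ, List.cons.injEq] at h
      obtain ⟨hb', hm⟩ := h
      subst hb'
      have := ih hm
      simp only [List.length_cons, Nat.bit_true]
      have h1 : 1 ≤ 2^(m.bits.length) := Nat.one_le_two_pow
      rw [pow_succ]
      omega

lemma getD_reverse' (l : List ℕ) (i : ℕ) (h : i < l.length) :
    l.reverse.getD i 0 = l.getD (l.length - 1 - i) 0 := by
  rw [List.getD_eq_getElem _ _ (by simpa using h),
      List.getD_eq_getElem _ _ (by omega)]
  exact List.getElem_reverse _

lemma extBin_eq (ω : ℕ) :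
    extBin ω = (List.replicate (binRep ω).length true ++ (binRep ω).map (!·)) ++ [false] :=
  rfl

lemma Z0_eq (ω n : ℕ) (hn : (binRep ω).length = n) :
    Z0 ω = (posOf (binRep ω) true).map (· + n) ++ [2*n+1] := by
  have h1 : posOf [false] false = [1] := rfl
  rw [Z0, extBin_eq, posOf_append, posOf_append, h1, posOf_replicate,
      posOf_map_not]
  simp [hn, List.map_map, Function.comp_def, two_mul, Nat.add_assoc, Nat.add_comm]

lemma Z1_eq (ω n : ℕ) (hn : (binRep ω).length = n) :
    Z1 ω = (List.range n).map (· + 1) ++ (posOf (binRep ω) false).map (· + n) := by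
  have h1 : posOf [false] true = [] := rfl
  rw [Z1, extBin_eq, posOf_append, posOf_append, h1, posOf_replicate,
      posOf_map_not]
  simp [hn]

/-- The fixed point `f = b_{n+1}` of `P_s` equals `2n+1` when `ω = 2ⁿ-1`,
and equals `n + f₀` otherwise, where `f₀` is the 1-indexed position of the
leftmost zero of `B`. -/
theorem stmt11 (ω n : ℕ) (hω : 0 < ω) (hn : (binRep ω).length = n) :
    (ω = 2^n - 1 → (Pb ω).getD n 0 = 2*n+1) ∧
    (ω ≠ 2^n - 1 → (Pb ω).getD n 0 = n + ((binRep ω).idxOf false + 1)) := by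
  constructor
  · intro hcase
    have hB : binRep ω = List.replicate n true := by
      rw [binRep, hcase, bits_two_pow_sub_one, List.reverse_replicate]
    have hpos : posOf (binRep ω) true = (List.range n).map (· + 1) := by
      rw [hB, posOf_replicate, if_pos rfl]
    have hZ0 := Z0_eq ω n hn
    rw [hpos] at hZ0
    have hlen : (Z0 ω).length = n + 1 := by simp [hZ0]
    rw [Pb, List.getD_append _ _ _ _ (by omega), hZ0,
        List.getD_append_right _ _ _ _ (by simp)]
    simp
  · intro hcase
    -- false occurs in B
    have hmem : false ∈ binRep ω := by
      by_contra hf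
      have hall : ∀ x ∈ binRep ω, x = true := by
        intro x hx
        cases x
        · exact absurd hx hf
        · rfl
      have hrep : binRep ω = List.replicate n true := by
        rw [← hn]
        exact List.eq_replicate_of_mem hall
      have hbits : (Nat.bits ω) = List.replicate n true := by
        have : (binRep ω).reverse = Nat.bits ω := by rw [binRep, List.reverse_reverse]
        rw [← this, hrep, List.reverse_replicate]
      have hlen : (Nat.bits ω).length = n := by rw [hbits]; simp
      have := eq_two_pow_sub_one_of_bits_all_true ω (by rw [hbits]; simp)
      rw [hlen] at this
      exact hcase this
    set B := binRep ω with hBdef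
    set k := B.count true with hk
    have hcount : k + B.count false = n := by rw [hk, ← hn]; exact count_bool B
    have hfpos : 0 < B.count false := List.count_pos_iff.2 hmem
    have hklt : k + 1 ≤ n := by omega
    have hZ0 := Z0_eq ω n hn
    have hZ1 := Z1_eq ω n hn
    have hlenZ0 : (Z0 ω).length = k + 1 := by
      simp [hZ0, length_posOf]; rfl
    have hlenZ1 : (Z1 ω).length = n + B.count false := by
      simp [hZ1, length_posOf]; rfl
    rw [Pb, List.getD_append_right _ _ _ _ (by omega), hlenZ0,
        getD_reverse' _ _ (by rw [hlenZ1]; omega), hlenZ1]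
    have hidx : n + B.count false - 1 - (n - (k + 1)) = n := by omega
    rw [hidx, hZ1, List.getD_append_right _ _ _ _ (by simp)]
    simp only [List.length_map, List.length_range, Nat.sub_self]
    have hne : posOf B false ≠ [] := by
      have h1 := length_posOf B false
      exact List.ne_nil_of_length_pos (by omega)
    obtain ⟨y, t, hyt⟩ := List.exists_cons_of_ne_nil hne
    have hhead := posOf_head B false hmem
    rw [hyt] at hhead ⊢
    simp at hhead ⊢
    omega
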